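/- With the weighted-graph and unit potential flow setup below, the electric flow state |f⟩ satisfies: (i) ‖|f⟩‖ = 1; (ii) |f⟩ is antisymmetric, i.e. Π₊|f⟩ = 0; (iii) ⟨φ_s|f⟩ = 1/√(2 R_s d_s), equivalently √(d_s)⟨φ_s|f⟩ = 1/√(2R_s); (iv) ⟨φ_x|f⟩ = 0 for every x ∉ {s} ∪ M; and (v) Σ_{m ∈ M} √(d_m) ⟨φ_m|f⟩ = −1/√(2R_s). -/

import Mathlib

open scoped InnerProductSpace BigOperators

namespace Elfs

variable {V : Type*} [Fintype V] [DecidableEq V]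

/-- The degree of a vertex: `d_x = Σ_y w_{xy}`. -/
noncomputable def deg (w : V → V → ℝ) (x : V) : ℝ := ∑ y, w x y

/-- The basis state `|xy⟩` of the edge space. -/
noncomputable def ket (p : V × V) : EuclideanSpace ℂ (V × V) :=
  EuclideanSpace.single p 1

/-- The star state `|φ_x⟩ = (1/√d_x) Σ_y √(w_{xy}) |xy⟩`. -/
noncomputable def starState (w : V → V → ℝ) (x : V) : EuclideanSpace ℂ (V × V) :=
  ((Real.sqrt (deg w x) : ℂ))⁻¹ • ∑ y, ((Real.sqrt (w x y) : ℝ) : ℂ) • ket (x, y)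

/-- The electric flow state `|f⟩ = (1/√(2 R_s)) Σ_{(x,y)} (f_{xy}/√(w_{xy})) |xy⟩`
for the potential flow `f_{xy} = w_{xy}(v_x − v_y)` (terms with `w_{xy} = 0` contribute `0`,
matching the restriction of the sum to edges of positive weight). -/
noncomputable def flowState (w : V → V → ℝ) (v : V → ℝ) (s : V) :
    EuclideanSpace ℂ (V × V) :=
  ((Real.sqrt (2 * v s) : ℂ))⁻¹ •
    ∑ p : V × V, ((w p.1 p.2 * (v p.1 - v p.2) / Real.sqrt (w p.1 p.2) : ℝ) : ℂ) • ket p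

/-- The symmetric subspace `span{|xy⟩ + |yx⟩ : (x,y) ∈ E}`. -/
noncomputable def symSpan (E : Set (V × V)) : Submodule ℂ (EuclideanSpace ℂ (V × V)) :=
  Submodule.span ℂ {u | ∃ p ∈ E, u = ket p + ket p.swap}

/-- `Π₊`, the orthogonal projection onto the symmetric subspace. -/
noncomputable def projSym (E : Set (V × V)) :
    EuclideanSpace ℂ (V × V) →ₗ[ℂ] EuclideanSpace ℂ (V × V) :=
  (symSpan E).subtype ∘ₗ (Submodule.orthogonalProjection (symSpan E)).toLinearMap

end Elfs

open Elfs
namespace ElfsAux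

variable {V : Type*} [Fintype V] [DecidableEq V]

lemma sum_ket_apply (c : V × V → ℂ) (q : V × V) :
    (∑ p, c p • ket p) q = c q := by
  rw [show ((∑ p, c p • ket p) q) = ∑ p, (c p • ket p) q from
    by rw [WithLp.ofLp_sum, Finset.sum_apply]]
  simp [ket, EuclideanSpace.single_apply]

lemma sqrt_mul_div (a t : ℝ) (ha : 0 ≤ a) :
    Real.sqrt a * (a * t / Real.sqrt a) = a * t := by
  rcases eq_or_lt_of_le ha with h | h
  · simp [← h]
  · rw [mul_comm, div_mul_cancel₀]
    exact (Real.sqrt_pos.mpr h).ne'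

lemma sq_div_sqrt (a t : ℝ) (ha : 0 ≤ a) :
    (a * t / Real.sqrt a) ^ 2 = a * t ^ 2 := by
  rcases eq_or_lt_of_le ha with h | h
  · simp [← h]
  · rw [div_pow, Real.sq_sqrt ha, mul_pow]
    field_simp

/-- inner product of star state and flow state -/
lemma inner_star_flow (w : V → V → ℝ) (hw0 : ∀ x y, 0 ≤ w x y) (v : V → ℝ) (s x : V) :
    ⟪starState w x, flowState w v s⟫_ℂ =
      ((((Real.sqrt (deg w x))⁻¹ * (Real.sqrt (2 * v s))⁻¹ *
        ∑ y, w x y * (v x - v y) : ℝ)) : ℂ) := by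
  unfold starState flowState
  rw [inner_smul_left, inner_smul_right, sum_inner]
  have hterm : ∀ y : V,
      ⟪((Real.sqrt (w x y) : ℝ) : ℂ) • ket (x, y),
        ∑ p : V × V, ((w p.1 p.2 * (v p.1 - v p.2) / Real.sqrt (w p.1 p.2) : ℝ) : ℂ) •
          ket p⟫_ℂ = ((w x y * (v x - v y) : ℝ) : ℂ) := by
    intro y
    rw [inner_smul_left, ket, EuclideanSpace.inner_single_left, sum_ket_apply]
    simp only [Complex.conj_ofReal, map_one, one_mul]
    rw [← Complex.ofReal_mul, sqrt_mul_div _ _ (hw0 x y)]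
  simp only [hterm, ← Complex.ofReal_sum, map_inv₀, Complex.conj_ofReal,
    Complex.ofReal_mul, Complex.ofReal_inv]
  push_cast
  ring

lemma flow_apply (w : V → V → ℝ) (v : V → ℝ) (s : V) (q : V × V) :
    flowState w v s q = ((Real.sqrt (2 * v s) : ℂ))⁻¹ *
      ((w q.1 q.2 * (v q.1 - v q.2) / Real.sqrt (w q.1 q.2) : ℝ) : ℂ) := by
  unfold flowState
  rw [PiLp.smul_apply, sum_ket_apply, smul_eq_mul]


lemma swap_sum (w : V → V → ℝ) (hwsymm : ∀ x y, w x y = w y x) (v : V → ℝ) :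
    ∑ x, ∑ y, w x y * (v x - v y) * v y = - ∑ x, ∑ y, w x y * (v x - v y) * v x := by
  rw [Finset.sum_comm, ← Finset.sum_neg_distrib]
  refine Finset.sum_congr rfl fun y _ => ?_
  rw [← Finset.sum_neg_distrib]
  refine Finset.sum_congr rfl fun x _ => ?_
  rw [hwsymm x y]; ring

lemma sum_vx_netflow (w : V → V → ℝ) (v : V → ℝ) (s : V) (M : Finset V) (hsM : s ∉ M)
    (hvM : ∀ y ∈ M, v y = 0)
    (hunit : ∑ y, w s y * (v s - v y) = 1)
    (hcons : ∀ x, x ≠ s → x ∉ M → ∑ y, w x y * (v x - v y) = 0) :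
    ∑ x, (∑ y, w x y * (v x - v y)) * v x = v s := by
  rw [Finset.sum_eq_single_of_mem s (Finset.mem_univ s)]
  · rw [hunit, one_mul]
  · intro x _ hx
    by_cases hxM : x ∈ M
    · rw [hvM x hxM, mul_zero]
    · rw [hcons x hx hxM, zero_mul]

lemma sum_sq_flow (w : V → V → ℝ) (hwsymm : ∀ x y, w x y = w y x) (v : V → ℝ) (s : V)
    (M : Finset V) (hsM : s ∉ M) (hvM : ∀ y ∈ M, v y = 0)
    (hunit : ∑ y, w s y * (v s - v y) = 1)
    (hcons : ∀ x, x ≠ s → x ∉ M → ∑ y, w x y * (v x - v y) = 0) :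
    ∑ x, ∑ y, w x y * (v x - v y) ^ 2 = 2 * v s := by
  have h1 : ∀ x y : V, w x y * (v x - v y) ^ 2
      = w x y * (v x - v y) * v x - w x y * (v x - v y) * v y := fun x y => by ring
  simp_rw [h1, Finset.sum_sub_distrib]
  rw [swap_sum w hwsymm v, sub_neg_eq_add]
  have h2 : ∑ x, ∑ y, w x y * (v x - v y) * v x = v s := by
    rw [← sum_vx_netflow w v s M hsM hvM hunit hcons]
    exact Finset.sum_congr rfl fun x _ => (Finset.sum_mul _ _ _).symm
  rw [h2]; ring

lemma sum_netflow_M (w : V → V → ℝ) (hwsymm : ∀ x y, w x y = w y x) (v : V → ℝ) (s : V)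
    (M : Finset V) (hsM : s ∉ M)
    (hunit : ∑ y, w s y * (v s - v y) = 1)
    (hcons : ∀ x, x ≠ s → x ∉ M → ∑ y, w x y * (v x - v y) = 0) :
    ∑ m ∈ M, ∑ y, w m y * (v m - v y) = -1 := by
  have htot : ∑ x, ∑ y, w x y * (v x - v y) = 0 := by
    have hh : ∑ x, ∑ y, w x y * (v x - v y)
        = - ∑ x, ∑ y, w x y * (v x - v y) := by
      nth_rewrite 1 [Finset.sum_comm]
      rw [← Finset.sum_neg_distrib]
      refine Finset.sum_congr rfl fun y _ => ?_
      rw [← Finset.sum_neg_distrib]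
      refine Finset.sum_congr rfl fun x _ => ?_
      rw [hwsymm x y]; ring
    linarith
  have hcomp : ∑ x ∈ Mᶜ, ∑ y, w x y * (v x - v y) = 1 := by
    rw [Finset.sum_eq_single_of_mem s (Finset.mem_compl.mpr hsM)]
    · exact hunit
    · intro x hx hxs
      exact hcons x hxs (Finset.mem_compl.mp hx)
  have := Finset.sum_add_sum_compl M (fun x => ∑ y, w x y * (v x - v y))
  rw [hcomp, htot] at this
  linarith

end ElfsAux

open Elfs ElfsAux

/-- Basic properties of the electric flow state. -/
theorem stmt6 {V : Type*} [Fintype V] [DecidableEq V]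
    (E : Set (V × V)) (w : V → V → ℝ) (s : V) (M : Finset V)
    (hE : ∀ p : V × V, p ∈ E ↔ p.swap ∈ E)
    (hw0 : ∀ x y, 0 ≤ w x y) (hwsymm : ∀ x y, w x y = w y x)
    (hwE : ∀ x y, (x, y) ∉ E → w x y = 0)
    (hdeg : ∀ x, 0 < deg w x)
    (hM : M.Nonempty) (hsM : s ∉ M)
    (v : V → ℝ) (hvM : ∀ y ∈ M, v y = 0) (hRpos : 0 < v s)
    (hunit : ∑ y, w s y * (v s - v y) = 1)
    (hcons : ∀ x, x ≠ s → x ∉ M → ∑ y, w x y * (v x - v y) = 0) :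
    ‖flowState w v s‖ = 1 ∧
    projSym E (flowState w v s) = 0 ∧
    ⟪starState w s, flowState w v s⟫_ℂ =
      (((Real.sqrt (2 * v s * deg w s))⁻¹ : ℝ) : ℂ) ∧
    (∀ x, x ≠ s → x ∉ M → ⟪starState w x, flowState w v s⟫_ℂ = 0) ∧
    ∑ m ∈ M, ((Real.sqrt (deg w m) : ℝ) : ℂ) * ⟪starState w m, flowState w v s⟫_ℂ =
      ((-(Real.sqrt (2 * v s))⁻¹ : ℝ) : ℂ) := by
  have h2vs : (0:ℝ) < 2 * v s := by linarith
  refine ⟨?_, ?_, ?_, ?_, ?_⟩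
  · -- norm
    rw [EuclideanSpace.norm_eq]
    have hc : ∀ q : V × V, ‖flowState w v s q‖ ^ 2
        = (2 * v s)⁻¹ * (w q.1 q.2 * (v q.1 - v q.2) ^ 2) := by
      intro q
      rw [flow_apply, norm_mul, norm_inv, Complex.norm_real, Complex.norm_real,
        Real.norm_eq_abs, Real.norm_eq_abs, abs_of_nonneg (Real.sqrt_nonneg _),
        mul_pow, inv_pow, Real.sq_sqrt h2vs.le, sq_abs,
        sq_div_sqrt _ _ (hw0 q.1 q.2)]
    simp_rw [hc]
    rw [← Finset.mul_sum]
    rw [show (∑ q : V × V, w q.1 q.2 * (v q.1 - v q.2) ^ 2)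
        = ∑ x, ∑ y, w x y * (v x - v y) ^ 2 from Fintype.sum_prod_type _,
      sum_sq_flow w hwsymm v s M hsM hvM hunit hcons,
      inv_mul_cancel₀ h2vs.ne', Real.sqrt_one]
  · -- projection
    have hmem : flowState w v s ∈ (symSpan E)ᗮ := by
      rw [Submodule.mem_orthogonal]
      intro u hu
      refine Submodule.span_induction ?_ ?_ ?_ ?_ hu
      · rintro u ⟨p, _, rfl⟩
        rw [inner_add_left]
        have hk : ∀ q : V × V, ⟪ket q, flowState w v s⟫_ℂ
            = ((Real.sqrt (2 * v s) : ℂ))⁻¹ *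
              ((w q.1 q.2 * (v q.1 - v q.2) / Real.sqrt (w q.1 q.2) : ℝ) : ℂ) := by
          intro q
          rw [ket, EuclideanSpace.inner_single_left, flow_apply, map_one, one_mul]
        rw [hk p, hk p.swap, ← mul_add, ← Complex.ofReal_add]
        have : w p.swap.1 p.swap.2 * (v p.swap.1 - v p.swap.2) / Real.sqrt (w p.swap.1 p.swap.2)
            = w p.2 p.1 * (v p.2 - v p.1) / Real.sqrt (w p.2 p.1) := rfl
        rw [this]
        have hz : w p.1 p.2 * (v p.1 - v p.2) / Real.sqrt (w p.1 p.2)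
            + w p.2 p.1 * (v p.2 - v p.1) / Real.sqrt (w p.2 p.1) = 0 := by
          rw [hwsymm p.2 p.1]; ring
        rw [hz, Complex.ofReal_zero, mul_zero]
      · exact inner_zero_left _
      · intro a b _ _ ha hb
        rw [inner_add_left, ha, hb, add_zero]
      · intro c a _ ha
        rw [inner_smul_left, ha, mul_zero]
    have h0 : Submodule.orthogonalProjection (symSpan E) (flowState w v s) = 0 :=
      Submodule.orthogonalProjectionOnto_apply_of_mem_orthogonal hmem
    simp [projSym, h0]
  · -- source overlap
    rw [inner_star_flow w hw0, hunit, mul_one]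
    congr 1
    rw [Real.sqrt_mul h2vs.le, mul_inv]
    ring
  · -- interior
    intro x hx1 hx2
    rw [inner_star_flow w hw0, hcons x hx1 hx2, mul_zero, Complex.ofReal_zero]
  · -- sink
    have hterm : ∀ m ∈ M, ((Real.sqrt (deg w m) : ℝ) : ℂ) * ⟪starState w m, flowState w v s⟫_ℂ
        = (((Real.sqrt (2 * v s))⁻¹ * ∑ y, w m y * (v m - v y) : ℝ) : ℂ) := by
      intro m _
      rw [inner_star_flow w hw0, ← Complex.ofReal_mul]
      congr 1
      have hne : Real.sqrt (deg w m) ≠ 0 := (Real.sqrt_pos.mpr (hdeg m)).ne'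
      field_simp
    rw [Finset.sum_congr rfl hterm, ← Complex.ofReal_sum, ← Finset.mul_sum,
      sum_netflow_M w hwsymm v s M hsM hunit hcons]
    congr 1
    ring
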